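/- Let K : ℝ → ℝ be even with K ∈ L¹(ℝ) and ξ ↦ ξK(ξ) ∈ L¹(ℝ), let k ∈ ℝ with k ≠ 0, let g : ℝ → ℂ be a continuously differentiable 2π-periodic function, and let n ∈ ℤ. Then K̂(q) = ∫_ℝ K(ξ)e^{−iqξ}dξ is differentiable, and the n-th Fourier coefficient of the 2π-periodic function θ ↦ (K∗_θg)(θ) − k(K₁∗_θg')(θ) equals (K̂(nk) + nk·K̂'(nk))·ĝ(n), i.e. it equals Ω'(nk)ĝ(n) where Ω(q) = qK̂(q). -/

import Mathlib

open MeasureTheory Real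

/-- The Fourier transform `K̂(q) = ∫ K(ξ) e^{−iqξ} dξ` of `K`. -/
noncomputable def fourierKernel (K : ℝ → ℝ) (q : ℝ) : ℂ :=
  ∫ ξ : ℝ, (K ξ : ℂ) * Complex.exp (-Complex.I * q * ξ)

lemma hasDerivAt_expI (a : ℂ) (x : ℝ) :
    HasDerivAt (fun t : ℝ => Complex.exp (a * t)) (Complex.exp (a * x) * a) x := by
  have h : HasDerivAt (fun z : ℂ => Complex.exp (a * z)) (Complex.exp (a * x) * a) (x : ℂ) := by
    simpa [mul_one] using ((hasDerivAt_id (x : ℂ)).const_mul a).cexp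
  exact h.comp_ofReal

lemma expI_periodic (n : ℤ) :
    Function.Periodic (fun θ : ℝ => Complex.exp (-Complex.I * n * θ)) (2 * π) := by
  intro θ
  have h1 : Complex.exp (((-n : ℤ) : ℂ) * (2 * π * Complex.I)) = 1 :=
    Complex.exp_int_mul_two_pi_mul_I (-n)
  have h2 : (-Complex.I * n * ((θ + 2 * π : ℝ) : ℂ)) =
      -Complex.I * n * (θ : ℂ) + ((-n : ℤ) : ℂ) * (2 * π * Complex.I) := by
    push_cast; ring
  simp only []
  show Complex.exp (-Complex.I * n * ((θ + 2 * π : ℝ) : ℂ)) = _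
  rw [h2, Complex.exp_add, h1, mul_one]

lemma expI_norm (n : ℤ) (θ : ℝ) : ‖Complex.exp (-Complex.I * n * θ)‖ = 1 := by
  have : (-Complex.I * n * (θ : ℂ)) = ((-(n * θ) : ℝ) : ℂ) * Complex.I := by push_cast; ring
  rw [this, Complex.norm_exp_ofReal_mul_I]

lemma expI_norm' (a b : ℝ) : ‖Complex.exp (-Complex.I * a * b)‖ = 1 := by
  have : (-Complex.I * a * (b : ℂ)) = ((-(a * b) : ℝ) : ℂ) * Complex.I := by push_cast; ring
  rw [this, Complex.norm_exp_ofReal_mul_I]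

lemma expI_continuous (n : ℤ) : Continuous fun θ : ℝ => Complex.exp (-Complex.I * n * θ) :=
  Complex.continuous_exp.comp (continuous_const.mul Complex.continuous_ofReal)

lemma periodic_bound {h : ℝ → ℂ} (hc : Continuous h) (hp : Function.Periodic h (2 * π)) :
    ∃ C : ℝ, ∀ x, ‖h x‖ ≤ C := by
  obtain ⟨C, hC⟩ := (isCompact_Icc (a := (0:ℝ)) (b := 2 * π)).exists_bound_of_continuousOn
    hc.continuousOn
  refine ⟨C, fun x => ?_⟩
  obtain ⟨y, hy, hxy⟩ := hp.exists_mem_Ico₀ Real.two_pi_pos x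
  rw [hxy]
  exact hC y (Set.Ico_subset_Icc_self hy)

lemma hasDerivAt_exp_slot (ξ : ℝ) (q : ℝ) :
    HasDerivAt (fun q : ℝ => Complex.exp (-Complex.I * q * ξ))
      (Complex.exp (-Complex.I * q * ξ) * (-Complex.I * ξ)) q := by
  have h := hasDerivAt_expI (-Complex.I * ξ) q
  have he : (fun t : ℝ => Complex.exp (-Complex.I * ξ * t)) =
      fun t : ℝ => Complex.exp (-Complex.I * t * ξ) := funext fun t => by ring_nf
  rw [he] at h
  have : (-Complex.I * (ξ:ℂ) * (q:ℂ)) = -Complex.I * (q:ℂ) * (ξ:ℂ) := by ring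
  rwa [this] at h

lemma fourierKernel_hasDerivAt (K : ℝ → ℝ) (hK : Integrable K)
    (hK1 : Integrable (fun ξ => ξ * K ξ)) (q : ℝ) :
    HasDerivAt (fourierKernel K)
      (∫ ξ : ℝ, (K ξ : ℂ) * (Complex.exp (-Complex.I * q * ξ) * (-Complex.I * ξ))) q := by
  have hmeas : ∀ x : ℝ, AEStronglyMeasurable
      (fun ξ : ℝ => (K ξ : ℂ) * Complex.exp (-Complex.I * x * ξ)) volume := fun x =>
    (Complex.continuous_ofReal.comp_aestronglyMeasurable hK.1).mul
      (Complex.continuous_exp.comp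
        (continuous_const.mul Complex.continuous_ofReal)).aestronglyMeasurable
  have h := hasDerivAt_integral_of_dominated_loc_of_deriv_le (𝕜 := ℝ) (μ := volume)
      (F := fun x ξ => (K ξ : ℂ) * Complex.exp (-Complex.I * x * ξ))
      (F' := fun x ξ => (K ξ : ℂ) * (Complex.exp (-Complex.I * x * ξ) * (-Complex.I * ξ)))
      (x₀ := q) (bound := fun ξ => ‖ξ * K ξ‖) (s := Set.univ) Filter.univ_mem
      (Filter.Eventually.of_forall hmeas)
      (by
        apply hK.norm.mono' (hmeas q)
        filter_upwards with ξ
        rw [norm_mul, expI_norm', mul_one, Complex.norm_real])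
      ((Complex.continuous_ofReal.comp_aestronglyMeasurable hK.1).mul
        (((Complex.continuous_exp.comp (continuous_const.mul Complex.continuous_ofReal))).mul
          (continuous_const.mul Complex.continuous_ofReal)).aestronglyMeasurable)
      (by
        filter_upwards with ξ x _
        rw [norm_mul, norm_mul, expI_norm', one_mul, norm_mul, Complex.norm_real,
          Complex.norm_real]
        simp [Real.norm_eq_abs, abs_mul]
        ring_nf
        exact le_of_eq (by ring))
      hK1.norm
      (by
        filter_upwards with ξ x _
        exact (hasDerivAt_exp_slot ξ x).const_mul _)
  exact h.2

lemma conv_fourier (f : ℝ → ℝ) (hf : Integrable f) (h : ℝ → ℂ) (hh : Continuous h)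
    (hhp : Function.Periodic h (2 * π)) (C : ℝ) (hC : ∀ x, ‖h x‖ ≤ C) (k : ℝ) (n : ℤ) :
    (∫ θ in (0:ℝ)..(2 * π),
        (∫ ξ : ℝ, (f ξ : ℂ) * h (θ - k * ξ)) * Complex.exp (-Complex.I * n * θ))
      = (∫ ξ : ℝ, (f ξ : ℂ) * Complex.exp (-Complex.I * n * k * ξ)) *
        ∫ θ in (0:ℝ)..(2 * π), h θ * Complex.exp (-Complex.I * n * θ) := by
  have h02 : (0:ℝ) ≤ 2 * π := by positivity
  set e : ℝ → ℂ := fun θ => Complex.exp (-Complex.I * n * θ) with he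
  set H : ℝ → ℂ := fun u => h u * e u with hH
  have HP : Function.Periodic H (2 * π) := hhp.mul (expI_periodic n)
  set μ : Measure ℝ := volume.restrict (Set.Ioc 0 (2 * π)) with hμ
  have hasm : AEStronglyMeasurable
      (fun p : ℝ × ℝ => (f p.2 : ℂ) * h (p.1 - k * p.2) * e p.1) (μ.prod volume) := by
    refine (AEStronglyMeasurable.mul ?_ ?_).mul ?_
    · exact Complex.continuous_ofReal.comp_aestronglyMeasurable hf.1.comp_snd
    · exact (hh.comp
        (continuous_fst.sub (continuous_const.mul continuous_snd))).aestronglyMeasurable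
    · exact ((expI_continuous n).comp continuous_fst).aestronglyMeasurable
  have hbound : Integrable (fun p : ℝ × ℝ => C * ‖f p.2‖) (μ.prod volume) := by
    refine Integrable.mul_prod (f := fun _ : ℝ => C) (g := fun ξ : ℝ => ‖f ξ‖) ?_ hf.norm
    exact integrableOn_const measure_Ioc_lt_top.ne
  have hint : Integrable (fun p : ℝ × ℝ => (f p.2 : ℂ) * h (p.1 - k * p.2) * e p.1)
      (μ.prod volume) := by
    refine hbound.mono' hasm ?_
    filter_upwards with p
    rw [norm_mul, norm_mul, he]
    simp only []
    rw [expI_norm, mul_one, Complex.norm_real]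
    calc ‖f p.2‖ * ‖h (p.1 - k * p.2)‖ ≤ ‖f p.2‖ * C :=
          mul_le_mul_of_nonneg_left (hC _) (norm_nonneg _)
      _ = C * ‖f p.2‖ := mul_comm _ _
  have step1 : (∫ θ in (0:ℝ)..(2 * π),
        (∫ ξ : ℝ, (f ξ : ℂ) * h (θ - k * ξ)) * e θ)
      = ∫ θ, (∫ ξ : ℝ, (f ξ : ℂ) * h (θ - k * ξ) * e θ) ∂μ := by
    rw [intervalIntegral.integral_of_le h02]
    exact setIntegral_congr_fun measurableSet_Ioc fun θ _ => (integral_mul_const (e θ) _).symm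
  have step2 : (∫ θ, (∫ ξ : ℝ, (f ξ : ℂ) * h (θ - k * ξ) * e θ) ∂μ)
      = ∫ ξ : ℝ, ∫ θ, (f ξ : ℂ) * h (θ - k * ξ) * e θ ∂μ :=
    integral_integral_swap hint
  have step3 : ∀ ξ : ℝ, (∫ θ, (f ξ : ℂ) * h (θ - k * ξ) * e θ ∂μ)
      = ((f ξ : ℂ) * Complex.exp (-Complex.I * n * k * ξ)) *
        ∫ θ in (0:ℝ)..(2 * π), H θ := by
    intro ξ
    have hpt : ∀ θ : ℝ, (f ξ : ℂ) * h (θ - k * ξ) * e θ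
        = ((f ξ : ℂ) * Complex.exp (-Complex.I * n * k * ξ)) * H (θ - k * ξ) := by
      intro θ
      rw [hH, he]
      simp only []
      have : (-Complex.I * n * (θ : ℂ)) =
          -Complex.I * n * ((θ - k * ξ : ℝ) : ℂ) + -Complex.I * n * k * ξ := by
        push_cast; ring
      rw [this, Complex.exp_add]
      ring
    rw [hμ, ← intervalIntegral.integral_of_le h02]
    calc (∫ θ in (0:ℝ)..(2 * π), (f ξ : ℂ) * h (θ - k * ξ) * e θ)
        = ∫ θ in (0:ℝ)..(2 * π),
            ((f ξ : ℂ) * Complex.exp (-Complex.I * n * k * ξ)) * H (θ - k * ξ) :=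
          intervalIntegral.integral_congr fun θ _ => hpt θ
      _ = ((f ξ : ℂ) * Complex.exp (-Complex.I * n * k * ξ)) *
            ∫ θ in (0:ℝ)..(2 * π), H (θ - k * ξ) := intervalIntegral.integral_const_mul _ _
      _ = ((f ξ : ℂ) * Complex.exp (-Complex.I * n * k * ξ)) *
            ∫ θ in (0:ℝ)..(2 * π), H θ := by
          rw [intervalIntegral.integral_comp_sub_right H (k * ξ)]
          congr 1
          rw [show (0:ℝ) - k * ξ = -(k * ξ) by ring,
            show 2 * π - k * ξ = -(k * ξ) + 2 * π by ring]
          simpa using HP.intervalIntegral_add_eq (-(k * ξ)) 0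
  calc (∫ θ in (0:ℝ)..(2 * π), (∫ ξ : ℝ, (f ξ : ℂ) * h (θ - k * ξ)) * e θ)
      = ∫ ξ : ℝ, ((f ξ : ℂ) * Complex.exp (-Complex.I * n * k * ξ)) *
          ∫ θ in (0:ℝ)..(2 * π), H θ := by
        rw [step1, step2]; exact integral_congr_ae (Filter.Eventually.of_forall step3)
    _ = (∫ ξ : ℝ, (f ξ : ℂ) * Complex.exp (-Complex.I * n * k * ξ)) *
          ∫ θ in (0:ℝ)..(2 * π), H θ := integral_mul_const _ _

lemma ibp (g g' : ℝ → ℂ) (hg : ∀ x, HasDerivAt g (g' x) x) (hg'c : Continuous g')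
    (hgp : Function.Periodic g (2 * π)) (n : ℤ) :
    (∫ θ in (0:ℝ)..(2 * π), g' θ * Complex.exp (-Complex.I * n * θ))
      = (Complex.I * n) * ∫ θ in (0:ℝ)..(2 * π), g θ * Complex.exp (-Complex.I * n * θ) := by
  have hgc : Continuous g := by
    rw [continuous_iff_continuousAt]; exact fun x => (hg x).continuousAt
  set e : ℝ → ℂ := fun θ => Complex.exp (-Complex.I * n * θ) with he
  have hde : ∀ θ : ℝ, HasDerivAt e (e θ * (-Complex.I * n)) θ := fun θ =>
    hasDerivAt_expI (-Complex.I * n) θ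
  have hΦ : ∀ θ : ℝ, HasDerivAt (fun t => g t * e t)
      (g' θ * e θ + g θ * (e θ * (-Complex.I * n))) θ := fun θ => (hg θ).mul (hde θ)
  have hcont : Continuous fun θ => g' θ * e θ + g θ * (e θ * (-Complex.I * n)) :=
    (hg'c.mul (expI_continuous n)).add (hgc.mul ((expI_continuous n).mul continuous_const))
  have heval : (∫ θ in (0:ℝ)..(2 * π), (g' θ * e θ + g θ * (e θ * (-Complex.I * n))))
      = g (2 * π) * e (2 * π) - g 0 * e 0 :=
    intervalIntegral.integral_eq_sub_of_hasDerivAt (fun θ _ => hΦ θ)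
      (hcont.intervalIntegrable _ _)
  have hz : g (2 * π) * e (2 * π) - g 0 * e 0 = 0 := by
    have h1 : g (2 * π) = g 0 := by simpa using hgp 0
    have h2 : e (2 * π) = e 0 := by rw [he]; simpa only [zero_add] using expI_periodic n 0
    rw [h1, h2, sub_self]
  rw [hz] at heval
  rw [intervalIntegral.integral_add (f := fun θ => g' θ * e θ)
    (g := fun θ => g θ * (e θ * (-Complex.I * n))) ((hg'c.mul (expI_continuous n)).intervalIntegrable _ _)
    ((hgc.mul ((expI_continuous n).mul continuous_const)).intervalIntegrable _ _)] at heval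
  have h3 : (∫ θ in (0:ℝ)..(2 * π), g θ * (e θ * (-Complex.I * n)))
      = (∫ θ in (0:ℝ)..(2 * π), g θ * e θ) * (-Complex.I * n) := by
    rw [← intervalIntegral.integral_mul_const]
    exact intervalIntegral.integral_congr fun θ _ => by ring
  rw [h3] at heval
  have := eq_neg_of_add_eq_zero_left heval
  rw [this]; ring

/-- The operator `K⁽¹⁾∗ g = K∗_θ g − k·K₁∗_θ g'` is the Fourier multiplier with
symbol `Ω'(nk) = K̂(nk) + nk·K̂'(nk)`, where `Ω(q) = qK̂(q)`. -/
theorem K1_operator_fourier_multiplier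
    (K : ℝ → ℝ) (hK : Integrable K) (hK1 : Integrable (fun ξ => ξ * K ξ))
    (hKeven : ∀ x, K (-x) = K x) (k : ℝ) (hk : k ≠ 0)
    (g g' : ℝ → ℂ) (hg : ∀ x, HasDerivAt g (g' x) x) (hg' : Continuous g')
    (hgp : Function.Periodic g (2 * π)) (n : ℤ) :
    Differentiable ℝ (fourierKernel K) ∧
    (1 / (2 * π) : ℂ) *
        ∫ θ in (0:ℝ)..(2 * π),
          ((∫ ξ : ℝ, (K ξ : ℂ) * g (θ - k * ξ))
            - k * ∫ ξ : ℝ, ((ξ * K ξ : ℝ) : ℂ) * g' (θ - k * ξ))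
            * Complex.exp (-Complex.I * n * θ)
      = (fourierKernel K ((n : ℝ) * k) + ((n : ℝ) * k : ℝ) * deriv (fourierKernel K) ((n : ℝ) * k)) *
          ((1 / (2 * π) : ℂ) *
            ∫ θ in (0:ℝ)..(2 * π), g θ * Complex.exp (-Complex.I * n * θ)) := by
  have hgc : Continuous g := by
    rw [continuous_iff_continuousAt]; exact fun x => (hg x).continuousAt
  refine ⟨fun q => (fourierKernel_hasDerivAt K hK hK1 q).differentiableAt, ?_⟩
  -- periodicity of g'
  have hg'p : Function.Periodic g' (2 * π) := by
    intro x
    have hinner : HasDerivAt (fun y : ℝ => y + 2 * π) 1 x := by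
      simpa using (hasDerivAt_id x).add_const (2 * π)
    have h1 : HasDerivAt (g ∘ fun y : ℝ => y + 2 * π) ((1:ℝ) • g' (x + 2 * π)) x :=
      HasDerivAt.scomp_of_eq x (hg (x + 2 * π)) hinner rfl
    have h2 : HasDerivAt (fun y => g (y + 2 * π)) (g' (x + 2 * π)) x := by
      simpa [Function.comp_def] using h1
    have h3 : (fun y => g (y + 2 * π)) = g := funext fun y => hgp y
    rw [h3] at h2
    exact h2.unique (hg x)
  obtain ⟨Cg, hCg⟩ := periodic_bound hgc hgp
  obtain ⟨Cg', hCg'⟩ := periodic_bound hg' hg'p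
  -- the two convolution identities
  have conv1 := conv_fourier K hK g hgc hgp Cg hCg k n
  have conv2 : (∫ θ in (0:ℝ)..(2 * π),
        (∫ ξ : ℝ, ((ξ * K ξ : ℝ) : ℂ) * g' (θ - k * ξ)) * Complex.exp (-Complex.I * n * θ))
      = (∫ ξ : ℝ, ((ξ * K ξ : ℝ) : ℂ) * Complex.exp (-Complex.I * n * k * ξ)) *
        ∫ θ in (0:ℝ)..(2 * π), g' θ * Complex.exp (-Complex.I * n * θ) :=
    conv_fourier (fun ξ => ξ * K ξ) hK1 g' hg' hg'p Cg' hCg' k n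
  have hibp := ibp g g' hg hg' hgp n
  -- continuity of the two convolutions
  have hA : Continuous fun θ : ℝ => ∫ ξ : ℝ, (K ξ : ℂ) * g (θ - k * ξ) := by
    apply continuous_of_dominated (bound := fun ξ => ‖K ξ‖ * Cg)
    · exact fun θ => (Complex.continuous_ofReal.comp_aestronglyMeasurable hK.1).mul
        (hgc.comp (continuous_const.sub (continuous_const.mul continuous_id))).aestronglyMeasurable
    · intro θ
      filter_upwards with ξ
      rw [norm_mul, Complex.norm_real]
      exact mul_le_mul_of_nonneg_left (hCg _) (norm_nonneg _)
    · exact hK.norm.mul_const Cg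
    · filter_upwards with ξ
      exact continuous_const.mul (hgc.comp (continuous_id.sub continuous_const))
  have hB : Continuous fun θ : ℝ => ∫ ξ : ℝ, ((ξ * K ξ : ℝ) : ℂ) * g' (θ - k * ξ) := by
    apply continuous_of_dominated (bound := fun ξ => ‖ξ * K ξ‖ * Cg')
    · exact fun θ => (Complex.continuous_ofReal.comp_aestronglyMeasurable hK1.1).mul
        (hg'.comp (continuous_const.sub (continuous_const.mul continuous_id))).aestronglyMeasurable
    · intro θ
      filter_upwards with ξ
      rw [norm_mul, Complex.norm_real]
      exact mul_le_mul_of_nonneg_left (hCg' _) (norm_nonneg _)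
    · exact hK1.norm.mul_const Cg'
    · filter_upwards with ξ
      exact continuous_const.mul (hg'.comp (continuous_id.sub continuous_const))
  -- split the integral
  have hec := expI_continuous n
  have hsplit : (∫ θ in (0:ℝ)..(2 * π),
        ((∫ ξ : ℝ, (K ξ : ℂ) * g (θ - k * ξ))
          - k * ∫ ξ : ℝ, ((ξ * K ξ : ℝ) : ℂ) * g' (θ - k * ξ))
          * Complex.exp (-Complex.I * n * θ))
      = (∫ θ in (0:ℝ)..(2 * π),
          (∫ ξ : ℝ, (K ξ : ℂ) * g (θ - k * ξ)) * Complex.exp (-Complex.I * n * θ))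
        - (k : ℂ) * ∫ θ in (0:ℝ)..(2 * π),
          (∫ ξ : ℝ, ((ξ * K ξ : ℝ) : ℂ) * g' (θ - k * ξ)) * Complex.exp (-Complex.I * n * θ) := by
    have h1 : IntervalIntegrable
        (fun θ : ℝ => (∫ ξ : ℝ, (K ξ : ℂ) * g (θ - k * ξ)) * Complex.exp (-Complex.I * n * θ))
        volume 0 (2 * π) := (hA.mul hec).intervalIntegrable _ _
    have h2 : IntervalIntegrable
        (fun θ : ℝ => (∫ ξ : ℝ, ((ξ * K ξ : ℝ) : ℂ) * g' (θ - k * ξ)) *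
          Complex.exp (-Complex.I * n * θ)) volume 0 (2 * π) :=
      (hB.mul hec).intervalIntegrable _ _
    calc (∫ θ in (0:ℝ)..(2 * π),
          ((∫ ξ : ℝ, (K ξ : ℂ) * g (θ - k * ξ))
            - k * ∫ ξ : ℝ, ((ξ * K ξ : ℝ) : ℂ) * g' (θ - k * ξ))
            * Complex.exp (-Complex.I * n * θ))
        = ∫ θ in (0:ℝ)..(2 * π),
            ((∫ ξ : ℝ, (K ξ : ℂ) * g (θ - k * ξ)) * Complex.exp (-Complex.I * n * θ)
              - (k : ℂ) * ((∫ ξ : ℝ, ((ξ * K ξ : ℝ) : ℂ) * g' (θ - k * ξ)) *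
                Complex.exp (-Complex.I * n * θ))) :=
          intervalIntegral.integral_congr fun θ _ => by ring
      _ = _ := by
          rw [intervalIntegral.integral_sub h1 (h2.const_mul _),
            intervalIntegral.integral_const_mul]
  -- identify the Fourier kernel terms
  have hFk : fourierKernel K ((n : ℝ) * k)
      = ∫ ξ : ℝ, (K ξ : ℂ) * Complex.exp (-Complex.I * n * k * ξ) := by
    rw [fourierKernel]
    congr 1
    funext ξ
    congr 2
    push_cast; ring
  have hderiv : deriv (fourierKernel K) ((n : ℝ) * k)
      = ∫ ξ : ℝ, (K ξ : ℂ) *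
        (Complex.exp (-Complex.I * (((n : ℝ) * k : ℝ) : ℂ) * ξ) * (-Complex.I * ξ)) :=
    (fourierKernel_hasDerivAt K hK hK1 ((n : ℝ) * k)).deriv
  have hqD : (((n : ℝ) * k : ℝ) : ℂ) * deriv (fourierKernel K) ((n : ℝ) * k)
      = -(Complex.I * n * k) *
        ∫ ξ : ℝ, ((ξ * K ξ : ℝ) : ℂ) * Complex.exp (-Complex.I * n * k * ξ) := by
    rw [hderiv, ← integral_const_mul, ← integral_const_mul]
    congr 1
    funext ξ
    rw [show (-Complex.I * (((n : ℝ) * k : ℝ) : ℂ) * (ξ : ℝ)) = -Complex.I * n * k * ξ by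
      push_cast; ring]
    push_cast; ring
  rw [hsplit, conv1, conv2, hibp, hFk, hqD]
  ring
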